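/- arXiv:0803.4500 — 5 statements merged into one kernel-verified Lean document; each statement's English description precedes it below -/
import Mathlib

section
/- Let M ≥ 1 and α ∈ ℂ with |α| ≤ 1. Define f(z) = z^M (z + α)/(z·conj(α) + 1) and g(z) = f(z⁻¹). Then every nonzero z ∈ ℂ satisfying f(z) = g(z) (and not a pole of either side) lies on the unit circle |z| = 1. -/
lemma bethe_normSq_key (w α : ℂ) :
    Complex.normSq (w * (starRingEnd ℂ) α + 1) - Complex.normSq (w + α)
      = (1 - Complex.normSq w) * (1 - Complex.normSq α) := by
  simp [Complex.normSq_apply, Complex.mul_re, Complex.mul_im, Complex.add_re,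
    Complex.add_im, Complex.conj_re, Complex.conj_im]
  ring

lemma bethe_mob_le (α w : ℂ) (hα : ‖α‖ ≤ 1) (hw : ‖w‖ ≤ 1) :
    ‖w + α‖ ≤ ‖w * (starRingEnd ℂ) α + 1‖ := by
  have h := bethe_normSq_key w α
  have h1 : Complex.normSq w ≤ 1 := by
    rw [← Complex.sq_norm]; nlinarith [norm_nonneg w]
  have h2 : Complex.normSq α ≤ 1 := by
    rw [← Complex.sq_norm]; nlinarith [norm_nonneg α]
  have hns : Complex.normSq (w + α) ≤ Complex.normSq (w * (starRingEnd ℂ) α + 1) := by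
    nlinarith
  rw [Complex.norm_def, Complex.norm_def]
  exact Real.sqrt_le_sqrt hns

lemma bethe_mob_ge (α w : ℂ) (hα : ‖α‖ ≤ 1) (hw : 1 ≤ ‖w‖) :
    ‖w * (starRingEnd ℂ) α + 1‖ ≤ ‖w + α‖ := by
  have h := bethe_normSq_key w α
  have h1 : 1 ≤ Complex.normSq w := by
    rw [← Complex.sq_norm]; nlinarith
  have h2 : Complex.normSq α ≤ 1 := by
    rw [← Complex.sq_norm]; nlinarith [norm_nonneg α]
  have hns : Complex.normSq (w * (starRingEnd ℂ) α + 1) ≤ Complex.normSq (w + α) := by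
    nlinarith
  rw [Complex.norm_def, Complex.norm_def]
  exact Real.sqrt_le_sqrt hns

lemma bethe_aux (M : ℕ) (hM : 1 ≤ M) (α : ℂ) (hα : ‖α‖ ≤ 1)
    (z : ℂ) (hz : z ≠ 0)
    (hd1 : z * (starRingEnd ℂ) α + 1 ≠ 0)
    (hd2 : z⁻¹ * (starRingEnd ℂ) α + 1 ≠ 0)
    (hlt : ‖z‖ < 1) :
    z ^ M * (z + α) / (z * (starRingEnd ℂ) α + 1)
      ≠ (z⁻¹) ^ M * (z⁻¹ + α) / (z⁻¹ * (starRingEnd ℂ) α + 1) := by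
  intro heq
  have habs := congrArg (‖·‖) heq
  simp only [norm_div, norm_mul, norm_pow, norm_inv] at habs
  have hz0 : 0 < ‖z‖ := by
    simpa [norm_pos_iff] using hz
  have hd1' : 0 < ‖z * (starRingEnd ℂ) α + 1‖ := by
    simpa [norm_pos_iff] using hd1
  have hd2' : 0 < ‖z⁻¹ * (starRingEnd ℂ) α + 1‖ := by
    simpa [norm_pos_iff] using hd2
  -- LHS < 1
  have hle : ‖z + α‖ ≤ ‖z * (starRingEnd ℂ) α + 1‖ :=
    bethe_mob_le α z hα hlt.le
  have hL1 : ‖z‖ ^ M * ‖z + α‖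
      / ‖z * (starRingEnd ℂ) α + 1‖ ≤ ‖z‖ ^ M := by
    rw [div_le_iff₀ hd1']
    have : ‖z‖ ^ M * ‖z + α‖
        ≤ ‖z‖ ^ M * ‖z * (starRingEnd ℂ) α + 1‖ := by
      apply mul_le_mul_of_nonneg_left hle (by positivity)
    linarith
  have hLlt : ‖z‖ ^ M * ‖z + α‖
      / ‖z * (starRingEnd ℂ) α + 1‖ < 1 :=
    lt_of_le_of_lt hL1 (pow_lt_one₀ (norm_nonneg z) hlt (by omega))
  -- RHS > 1
  have hinv : 1 < (‖z‖)⁻¹ := (one_lt_inv₀ hz0).2 hlt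
  have hge : ‖z⁻¹ * (starRingEnd ℂ) α + 1‖ ≤ ‖z⁻¹ + α‖ := by
    apply bethe_mob_ge α z⁻¹ hα
    rw [norm_inv]; exact hinv.le
  have hR1 : (1 : ℝ) < (‖z‖)⁻¹ ^ M :=
    one_lt_pow₀ hinv (by omega)
  have hRgt : 1 < (‖z‖)⁻¹ ^ M * ‖z⁻¹ + α‖
      / ‖z⁻¹ * (starRingEnd ℂ) α + 1‖ := by
    rw [lt_div_iff₀ hd2']
    calc 1 * ‖z⁻¹ * (starRingEnd ℂ) α + 1‖
        < (‖z‖)⁻¹ ^ M * ‖z⁻¹ * (starRingEnd ℂ) α + 1‖ :=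
          mul_lt_mul_of_pos_right hR1 hd2'
      _ ≤ (‖z‖)⁻¹ ^ M * ‖z⁻¹ + α‖ :=
          mul_le_mul_of_nonneg_left hge (by positivity)
  linarith [habs.ge, habs.le]

/-- The Bethe ansatz equation `f(z) = g(z)` with
`f(z) = z^M (z+α)/(z·conj α + 1)` and `g(z) = f(z⁻¹)`, for `|α| ≤ 1`,
has all its (nonzero, non-pole) solutions on the unit circle. -/
theorem bethe_roots_on_unit_circle (M : ℕ) (hM : 1 ≤ M) (α : ℂ)
    (hα : ‖α‖ ≤ 1) (z : ℂ) (hz : z ≠ 0)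
    (hd1 : z * (starRingEnd ℂ) α + 1 ≠ 0)
    (hd2 : z⁻¹ * (starRingEnd ℂ) α + 1 ≠ 0)
    (heq : z ^ M * (z + α) / (z * (starRingEnd ℂ) α + 1)
        = (z⁻¹) ^ M * (z⁻¹ + α) / (z⁻¹ * (starRingEnd ℂ) α + 1)) :
    ‖z‖ = 1 := by
  rcases lt_trichotomy (‖z‖) 1 with h | h | h
  · exact absurd heq (bethe_aux M hM α hα z hz hd1 hd2 h)
  · exact h
  · have hz' : z⁻¹ ≠ 0 := inv_ne_zero hz
    have h' : ‖z⁻¹‖ < 1 := by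
      rw [norm_inv]
      exact inv_lt_one_of_one_lt₀ h
    have := bethe_aux M hM α hα z⁻¹ hz' hd2 (by rwa [inv_inv]) h'
    rw [inv_inv] at this
    exact absurd heq.symm this
end

section
/- For 0 < g < 1 and positive integer M, all roots z of the palindromic polynomial f(z) = z^{2M} + 1 + (1+g²)·∑_{m=1}^{M-1} z^{2m} lie on the unit circle. -/
/-- For `0 < g < 1`, all roots of the reduced palindromic Bethe polynomial
`z^{2M} + 1 + (1+g²)·∑_{m=1}^{M-1} z^{2m}` lie on the unit circle. -/
theorem reduced_palindromic_roots_on_unit_circle (M : ℕ) (hM : 1 ≤ M)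
    (g : ℝ) (hg0 : 0 < g) (hg1 : g < 1) (z : ℂ)
    (hroot : z ^ (2 * M) + 1
      + (1 + (g : ℂ) ^ 2) * ∑ m ∈ Finset.Icc 1 (M - 1), z ^ (2 * m) = 0) :
    ‖z‖ = 1 := by
  set w : ℂ := z ^ 2 with hw
  -- rewrite the sum in terms of a geometric sum
  have hIcc : Finset.Icc 1 (M - 1) = Finset.Ico 1 M := by
    rw [← Finset.Ico_add_one_right_eq_Icc]
    congr 1
    omega
  have hS : ∑ m ∈ Finset.Icc 1 (M - 1), z ^ (2 * m)
      = (∑ i ∈ Finset.range M, w ^ i) - 1 := by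
    have h0 : ∀ m : ℕ, z ^ (2 * m) = w ^ m := fun m => by rw [pow_mul]
    simp_rw [h0, hIcc, Finset.range_eq_Ico]
    rw [Finset.sum_eq_sum_Ico_succ_bot (by omega : 0 < M)]
    simp
  have hgeom : (∑ i ∈ Finset.range M, w ^ i) * (w - 1) = w ^ M - 1 := geom_sum_mul w M
  have hroot' : w ^ M + 1 + (1 + (g : ℂ) ^ 2) * ((∑ i ∈ Finset.range M, w ^ i) - 1) = 0 := by
    rw [← hS, ← pow_mul]; exact hroot
  have key : w ^ M * (w + (g : ℂ) ^ 2) = (g : ℂ) ^ 2 * w + 1 := by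
    linear_combination (w - 1) * hroot' - (1 + (g : ℂ) ^ 2) * hgeom
  -- take absolute values
  set r : ℝ := ‖w‖ with hr
  set a : ℝ := ‖w + (g : ℂ) ^ 2‖ with ha
  set b : ℝ := ‖(g : ℂ) ^ 2 * w + 1‖ with hb
  have habs : r ^ M * a = b := by
    rw [hr, ha, hb, ← norm_pow, ← norm_mul, key]
  have hdiff : b ^ 2 - a ^ 2 = (g ^ 4 - 1) * (r ^ 2 - 1) := by
    rw [hb, ha, hr, Complex.sq_norm, Complex.sq_norm, Complex.sq_norm]
    simp [Complex.normSq_apply, Complex.add_re, Complex.add_im, Complex.mul_re,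
      Complex.mul_im, pow_two]
    ring
  have hr0 : 0 ≤ r := norm_nonneg w
  have ha0 : 0 ≤ a := norm_nonneg _
  have hb0 : 0 ≤ b := norm_nonneg _
  have hg4 : g ^ 4 < 1 := pow_lt_one₀ hg0.le hg1 (by norm_num)
  have hrone : r = 1 := by
    rcases lt_trichotomy r 1 with h | h | h
    · exfalso
      have hr2 : r ^ 2 < 1 := by nlinarith
      have hpos : 0 < (g ^ 4 - 1) * (r ^ 2 - 1) :=
        mul_pos_of_neg_of_neg (by linarith) (by linarith)
      have h1 : a ^ 2 < b ^ 2 := by linarith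
      have h2 : r ^ M ≤ 1 := pow_le_one₀ hr0 h.le
      have hba : b ≤ a := by
        calc b = r ^ M * a := habs.symm
        _ ≤ 1 * a := mul_le_mul_of_nonneg_right h2 ha0
        _ = a := one_mul a
      have : b ^ 2 ≤ a ^ 2 := pow_le_pow_left₀ hb0 hba 2
      linarith
    · exact h
    · exfalso
      have hr2 : 1 < r ^ 2 := by nlinarith
      have hneg : (g ^ 4 - 1) * (r ^ 2 - 1) < 0 :=
        mul_neg_of_neg_of_pos (by linarith) (by linarith)
      have h1 : b ^ 2 < a ^ 2 := by linarith
      have h2 : r ≤ r ^ M := le_self_pow₀ h.le (by omega)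
      have hab : a ≤ b := by
        calc a = 1 * a := (one_mul a).symm
        _ ≤ r ^ M * a := mul_le_mul_of_nonneg_right (by linarith) ha0
        _ = b := habs
      have : a ^ 2 ≤ b ^ 2 := pow_le_pow_left₀ ha0 hab 2
      linarith
  have hz : ‖z‖ ^ 2 = 1 := by
    rw [← norm_pow, ← hw, ← hr, hrone]
  have hz0 : 0 ≤ ‖z‖ := norm_nonneg z
  have hfac : (‖z‖ - 1) * (‖z‖ + 1) = 0 := by
    linear_combination hz
  rcases mul_eq_zero.mp hfac with h | h
  · linarith
  · exfalso; linarith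
end

section
/- Let M be odd and 0 ≤ g with g² ≠ (M+1)/(M−1). With U, V as above, set X⁺ = U* − ig V* and X⁻ = U − ig V. Then (X⁺)² = (X⁻)² = 0 and {X⁺, X⁻} = ((M+1)/2 − g²(M−1)/2)·1. In particular {X⁺, X⁻} = 0 precisely when g² = (M+1)/(M−1). -/
/-- `U = ∑_{x odd, 1 ≤ x ≤ M} (−1)^{(x−1)/2} c_x`. -/
noncomputable def Uop {A : Type*} [Ring A] [Algebra ℂ A] (M : ℕ) (c : ℕ → A) : A :=
  ∑ x ∈ (Finset.Icc 1 M).filter (fun x => Odd x), ((-1 : ℂ) ^ ((x - 1) / 2)) • c x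

/-- `V = ∑_{x even, 1 ≤ x ≤ M} (−1)^{x/2} c_x`. -/
noncomputable def Vop {A : Type*} [Ring A] [Algebra ℂ A] (M : ℕ) (c : ℕ → A) : A :=
  ∑ x ∈ (Finset.Icc 1 M).filter (fun x => Even x), ((-1 : ℂ) ^ (x / 2)) • c x

lemma lin_sq_zero {A : Type*} [Ring A] [Algebra ℂ A] (S : Finset ℕ) (a : ℕ → ℂ) (d : ℕ → A)
    (h : ∀ x y, d x * d y + d y * d x = 0) :
    (∑ x ∈ S, a x • d x) * (∑ x ∈ S, a x • d x) = 0 := by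
  have hT : (∑ x ∈ S, a x • d x) * (∑ x ∈ S, a x • d x)
      = ∑ x ∈ S, ∑ y ∈ S, (a x * a y) • (d x * d y) := by
    rw [Finset.sum_mul_sum]
    refine Finset.sum_congr rfl fun x _ => Finset.sum_congr rfl fun y _ => ?_
    rw [smul_mul_assoc, mul_smul_comm, smul_smul]
  have h2 : (∑ x ∈ S, ∑ y ∈ S, (a x * a y) • (d x * d y))
      + (∑ x ∈ S, ∑ y ∈ S, (a x * a y) • (d x * d y)) = 0 := by
    nth_rewrite 2 [Finset.sum_comm]
    rw [← Finset.sum_add_distrib]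
    refine Finset.sum_eq_zero fun x _ => ?_
    rw [← Finset.sum_add_distrib]
    refine Finset.sum_eq_zero fun y _ => ?_
    rw [mul_comm (a y) (a x), ← smul_add, h, smul_zero]
  have h3 : (2 : ℂ) • (∑ x ∈ S, ∑ y ∈ S, (a x * a y) • (d x * d y)) = 0 := by
    rw [two_smul]; exact h2
  rw [hT]
  rcases smul_eq_zero.mp h3 with h' | h'
  · exact absurd h' two_ne_zero
  · exact h'

lemma lin_anticomm {A : Type*} [Ring A] [Algebra ℂ A] (S : Finset ℕ) (a b : ℕ → ℂ)
    (d e : ℕ → A)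
    (h : ∀ x y, d x * e y + e y * d x = if x = y then 1 else 0) :
    (∑ x ∈ S, a x • d x) * (∑ y ∈ S, b y • e y)
      + (∑ y ∈ S, b y • e y) * (∑ x ∈ S, a x • d x)
      = (∑ x ∈ S, a x * b x) • (1 : A) := by
  rw [Finset.sum_mul_sum, Finset.sum_mul_sum]
  rw [Finset.sum_comm (s := S) (t := S) (f := fun y x => (b y • e y) * (a x • d x))]
  rw [← Finset.sum_add_distrib]
  have hmain : ∀ x ∈ S, ((∑ y ∈ S, (a x • d x) * (b y • e y))
      + ∑ y ∈ S, (b y • e y) * (a x • d x)) = (a x * b x) • (1 : A) := by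
    intro x hx
    rw [← Finset.sum_add_distrib]
    have hterm : ∀ y ∈ S, (a x • d x) * (b y • e y) + (b y • e y) * (a x • d x)
        = if y = x then (a x * b x) • (1 : A) else 0 := by
      intro y _
      rw [smul_mul_assoc, smul_mul_assoc, mul_smul_comm, mul_smul_comm, smul_smul, smul_smul,
        mul_comm (b y) (a x), ← smul_add, h]
      by_cases hxy : x = y
      · subst hxy; simp
      · simp [hxy, Ne.symm hxy]
    rw [Finset.sum_congr rfl hterm, Finset.sum_ite_eq' S x (fun _ => (a x * b x) • (1 : A)),
      if_pos hx]
  rw [Finset.sum_congr rfl hmain, ← Finset.sum_smul]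

lemma card_odd_Icc (M : ℕ) : ((Finset.Icc 1 M).filter (fun x => Odd x)).card = (M + 1) / 2 := by
  induction M with
  | zero => simp
  | succ n ih =>
    have hins : Finset.Icc 1 (n + 1) = insert (n + 1) (Finset.Icc 1 n) := by
      ext x; simp only [Finset.mem_Icc, Finset.mem_insert]; omega
    rw [hins, Finset.filter_insert]
    by_cases h : Odd (n + 1)
    · rw [if_pos h, Finset.card_insert_of_notMem (by simp), ih]
      rcases h with ⟨j, hj⟩; omega
    · rw [if_neg h, ih]
      rw [Nat.odd_iff] at h; omega

/-- For `M` odd, the gl(1|1) generators `X⁺ = U* − ig V*`, `X⁻ = U − ig V`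
square to zero and have anticommutator `((M+1)/2 − g²(M−1)/2)·1`; the latter
vanishes precisely when `g² = (M+1)/(M−1)`. -/
theorem gl11_odd_generators {A : Type*} [Ring A] [Algebra ℂ A] [Nontrivial A]
    (M : ℕ) (hM : Odd M) (hM1 : 1 < M) (g : ℝ) (hg : 0 ≤ g)
    (c cdag : ℕ → A)
    (hcc : ∀ x y, c x * c y + c y * c x = 0)
    (hdd : ∀ x y, cdag x * cdag y + cdag y * cdag x = 0)
    (hdc : ∀ x y, cdag x * c y + c y * cdag x = if x = y then 1 else 0) :
    (Uop M cdag - (Complex.I * g) • Vop M cdag) *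
        (Uop M cdag - (Complex.I * g) • Vop M cdag) = 0 ∧
    (Uop M c - (Complex.I * g) • Vop M c) *
        (Uop M c - (Complex.I * g) • Vop M c) = 0 ∧
    (Uop M cdag - (Complex.I * g) • Vop M cdag) * (Uop M c - (Complex.I * g) • Vop M c)
        + (Uop M c - (Complex.I * g) • Vop M c) * (Uop M cdag - (Complex.I * g) • Vop M cdag)
      = (((M : ℂ) + 1) / 2 - (g : ℂ) ^ 2 * ((M : ℂ) - 1) / 2) • (1 : A) ∧
    ((Uop M cdag - (Complex.I * g) • Vop M cdag) * (Uop M c - (Complex.I * g) • Vop M c)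
        + (Uop M c - (Complex.I * g) • Vop M c) * (Uop M cdag - (Complex.I * g) • Vop M cdag)
      = 0 ↔ g ^ 2 = ((M : ℝ) + 1) / ((M : ℝ) - 1)) := by
  set a : ℕ → ℂ := fun x =>
    if Odd x then (-1 : ℂ) ^ ((x - 1) / 2) else -(Complex.I * g) * (-1 : ℂ) ^ (x / 2) with ha
  -- X as a single sum over Icc 1 M
  have key : ∀ d : ℕ → A, Uop M d - (Complex.I * g) • Vop M d
      = ∑ x ∈ Finset.Icc 1 M, a x • d x := by
    intro d
    have hsplit := Finset.sum_filter_add_sum_filter_not (Finset.Icc 1 M) (fun x => Odd x)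
      (fun x => a x • d x)
    have h1 : Uop M d = ∑ x ∈ (Finset.Icc 1 M).filter (fun x => Odd x), a x • d x := by
      rw [Uop]
      refine Finset.sum_congr rfl fun x hx => ?_
      simp only [Finset.mem_filter] at hx
      simp [ha, hx.2]
    have h2 : (Complex.I * (g : ℂ)) • Vop M d
        = -(∑ x ∈ (Finset.Icc 1 M).filter (fun x => ¬ Odd x), a x • d x) := by
      have hfe : (Finset.Icc 1 M).filter (fun x => ¬ Odd x)
          = (Finset.Icc 1 M).filter (fun x => Even x) := by
        simp [Nat.not_odd_iff_even]
      rw [Vop, Finset.smul_sum, hfe, ← Finset.sum_neg_distrib]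
      refine Finset.sum_congr rfl fun x hx => ?_
      simp only [Finset.mem_filter] at hx
      have hno : ¬ Odd x := Nat.not_odd_iff_even.mpr hx.2
      simp [ha, hno, smul_smul]
    rw [h1, h2, sub_neg_eq_add, hsplit]
  have e1 := lin_sq_zero (Finset.Icc 1 M) a cdag hdd
  have e2 := lin_sq_zero (Finset.Icc 1 M) a c hcc
  have e3 := lin_anticomm (Finset.Icc 1 M) a a cdag c hdc
  rw [← key cdag] at e1 e3
  rw [← key c] at e2 e3
  obtain ⟨k, hk⟩ := hM
  have hk1 : 1 ≤ k := by omega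
  -- compute the scalar
  have hsum : (∑ x ∈ Finset.Icc 1 M, a x * a x)
      = ((M : ℂ) + 1) / 2 - (g : ℂ) ^ 2 * ((M : ℂ) - 1) / 2 := by
    have hterm : ∀ x, a x * a x = if Odd x then (1 : ℂ) else -((g : ℂ) ^ 2) := by
      intro x
      have h1 : ∀ m : ℕ, ((-1 : ℂ) ^ m) * ((-1 : ℂ) ^ m) = 1 := by
        intro m
        rw [← pow_add, ← two_mul, pow_mul]
        norm_num
      by_cases h : Odd x
      · simp only [ha, if_pos h, h1]
      · simp only [ha, if_neg h]
        have : -(Complex.I * ↑g) * (-1 : ℂ) ^ (x / 2) * (-(Complex.I * ↑g) * (-1 : ℂ) ^ (x / 2))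
            = Complex.I ^ 2 * (g : ℂ) ^ 2 * ((-1 : ℂ) ^ (x / 2) * (-1 : ℂ) ^ (x / 2)) := by
          ring
        rw [this, h1, Complex.I_sq]
        ring
    rw [Finset.sum_congr rfl fun x _ => hterm x, Finset.sum_ite, Finset.sum_const,
      Finset.sum_const]
    have hcardo : ((Finset.Icc 1 M).filter (fun x => Odd x)).card = k + 1 := by
      rw [card_odd_Icc]; omega
    have hcardtot : (Finset.Icc 1 M).card = M := by simp
    have hcarde : ((Finset.Icc 1 M).filter (fun x => ¬ Odd x)).card = k := by
      have := Finset.card_filter_add_card_filter_not (s := Finset.Icc 1 M)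
        (p := fun x => Odd x)
      omega
    rw [hcardo, hcarde, hk]
    push_cast
    ring
  rw [hsum] at e3
  refine ⟨e1, e2, e3, ?_⟩
  rw [e3]
  have hM0 : ((M : ℝ) - 1) ≠ 0 := by
    have : (1 : ℝ) < (M : ℝ) := by exact_mod_cast hM1
    linarith
  have hcast : (((M : ℂ) + 1) / 2 - (g : ℂ) ^ 2 * ((M : ℂ) - 1) / 2)
      = ((((M : ℝ) + 1) / 2 - g ^ 2 * ((M : ℝ) - 1) / 2 : ℝ) : ℂ) := by
    push_cast
    ring
  constructor
  · intro h
    have hz : (((M : ℂ) + 1) / 2 - (g : ℂ) ^ 2 * ((M : ℂ) - 1) / 2) = 0 := by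
      rcases smul_eq_zero.mp h with h' | h'
      · exact h'
      · exact absurd h' one_ne_zero
    rw [hcast, Complex.ofReal_eq_zero] at hz
    field_simp
    linarith [hz]
  · intro h
    have hr : ((M : ℝ) + 1) / 2 - g ^ 2 * ((M : ℝ) - 1) / 2 = 0 := by
      rw [h]; field_simp; ring
    rw [hcast, hr, Complex.ofReal_zero, zero_smul]
end

section
/- For M = 3, the non-Hermitian Hamiltonian H acting on (ℂ²)^{⊗3}, given in fermionic form by H = −(c₁*c₂ − c₁c₂*) − (c₂*c₃ − c₂c₃*) + ig(n₁ − n₃), is intertwined by the explicit block-diagonal matrix η with blocks: 1 on the S^z = ±3/2 sectors, and on each 3-dimensional S^z = ±1/2 sector (ordered basis of weight vectors) the matrix (1/(g²−2))·[[−2, −2ig, g²],[2ig, −(g²+2), −2ig],[g², 2ig, −2]]. That is, η H = H* η, η = η*, and η is positive definite for 0 ≤ g² < 2. -/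
open Matrix ComplexOrder

/-- The non-Hermitian `M = 3` XX Hamiltonian
`H = −(c₁*c₂ − c₁c₂*) − (c₂*c₃ − c₂c₃*) + ig(n₁ − n₃)` on `(ℂ²)^{⊗3}`,
written in the sector-ordered weight basis
`(+++, −++, +−+, ++−, −−+, −+−, +−−, −−−)`: it is block diagonal with
`0` on the `S^z = ±3/2` sectors and the tridiagonal block
`[[−ig,1,0],[1,0,1],[0,1,ig]]` on each `S^z = ±1/2` sector. -/
noncomputable def H3chain (g : ℝ) : Matrix (Fin 8) (Fin 8) ℂ :=
  !![0, 0, 0, 0, 0, 0, 0, 0;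
     0, -(Complex.I * g), 1, 0, 0, 0, 0, 0;
     0, 1, 0, 1, 0, 0, 0, 0;
     0, 0, 1, Complex.I * g, 0, 0, 0, 0;
     0, 0, 0, 0, -(Complex.I * g), 1, 0, 0;
     0, 0, 0, 0, 1, 0, 1, 0;
     0, 0, 0, 0, 0, 1, Complex.I * g, 0;
     0, 0, 0, 0, 0, 0, 0, 0]

/-- The quasi-Hermiticity operator `η` for the `M = 3` chain: `1` on the
`S^z = ±3/2` sectors and
`(1/(g²−2))·[[−2, −2ig, g²],[2ig, −(g²+2), −2ig],[g², 2ig, −2]]`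
on each `S^z = ±1/2` sector. -/
noncomputable def eta3chain (g : ℝ) : Matrix (Fin 8) (Fin 8) ℂ :=
  !![1, 0, 0, 0, 0, 0, 0, 0;
     0, -2 / ((g : ℂ) ^ 2 - 2), -(2 * Complex.I * g) / ((g : ℂ) ^ 2 - 2),
       (g : ℂ) ^ 2 / ((g : ℂ) ^ 2 - 2), 0, 0, 0, 0;
     0, 2 * Complex.I * g / ((g : ℂ) ^ 2 - 2), -((g : ℂ) ^ 2 + 2) / ((g : ℂ) ^ 2 - 2),
       -(2 * Complex.I * g) / ((g : ℂ) ^ 2 - 2), 0, 0, 0, 0;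
     0, (g : ℂ) ^ 2 / ((g : ℂ) ^ 2 - 2), 2 * Complex.I * g / ((g : ℂ) ^ 2 - 2),
       -2 / ((g : ℂ) ^ 2 - 2), 0, 0, 0, 0;
     0, 0, 0, 0, -2 / ((g : ℂ) ^ 2 - 2), -(2 * Complex.I * g) / ((g : ℂ) ^ 2 - 2),
       (g : ℂ) ^ 2 / ((g : ℂ) ^ 2 - 2), 0;
     0, 0, 0, 0, 2 * Complex.I * g / ((g : ℂ) ^ 2 - 2), -((g : ℂ) ^ 2 + 2) / ((g : ℂ) ^ 2 - 2),
       -(2 * Complex.I * g) / ((g : ℂ) ^ 2 - 2), 0;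
     0, 0, 0, 0, (g : ℂ) ^ 2 / ((g : ℂ) ^ 2 - 2), 2 * Complex.I * g / ((g : ℂ) ^ 2 - 2),
       -2 / ((g : ℂ) ^ 2 - 2), 0;
     0, 0, 0, 0, 0, 0, 0, 1]

section Vec8Lemmas
variable {α : Type*} (a b c d e f g h : α)
@[simp] lemma vec8_0 : ![a,b,c,d,e,f,g,h] 0 = a := rfl
@[simp] lemma vec8_1 : ![a,b,c,d,e,f,g,h] 1 = b := rfl
@[simp] lemma vec8_2 : ![a,b,c,d,e,f,g,h] 2 = c := rfl
@[simp] lemma vec8_3 : ![a,b,c,d,e,f,g,h] 3 = d := rfl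
@[simp] lemma vec8_4 : ![a,b,c,d,e,f,g,h] 4 = e := rfl
@[simp] lemma vec8_5 : ![a,b,c,d,e,f,g,h] 5 = f := rfl
@[simp] lemma vec8_6 : ![a,b,c,d,e,f,g,h] 6 = g := rfl
@[simp] lemma vec8_7 : ![a,b,c,d,e,f,g,h] 7 = h := rfl
end Vec8Lemmas

section Vec8Mk
variable {α : Type*} (a b c d e f g h : α)
@[simp] lemma vec8m_0 (hlt : (0:ℕ) < 8) : ![a,b,c,d,e,f,g,h] ⟨0, hlt⟩ = a := rfl
@[simp] lemma vec8m_1 (hlt : (1:ℕ) < 8) : ![a,b,c,d,e,f,g,h] ⟨1, hlt⟩ = b := rfl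
@[simp] lemma vec8m_2 (hlt : (2:ℕ) < 8) : ![a,b,c,d,e,f,g,h] ⟨2, hlt⟩ = c := rfl
@[simp] lemma vec8m_3 (hlt : (3:ℕ) < 8) : ![a,b,c,d,e,f,g,h] ⟨3, hlt⟩ = d := rfl
@[simp] lemma vec8m_4 (hlt : (4:ℕ) < 8) : ![a,b,c,d,e,f,g,h] ⟨4, hlt⟩ = e := rfl
@[simp] lemma vec8m_5 (hlt : (5:ℕ) < 8) : ![a,b,c,d,e,f,g,h] ⟨5, hlt⟩ = f := rfl
@[simp] lemma vec8m_6 (hlt : (6:ℕ) < 8) : ![a,b,c,d,e,f,g,h] ⟨6, hlt⟩ = g := rfl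
@[simp] lemma vec8m_7 (hlt : (7:ℕ) < 8) : ![a,b,c,d,e,f,g,h] ⟨7, hlt⟩ = h := rfl
end Vec8Mk

/-- Auxiliary positive quadratic form equal to the `Sᶻ = ±1/2` block of `η`. -/
noncomputable def qform (g : ℝ) (u v w : ℂ) : ℝ :=
  (1 / (2 * (2 + g ^ 2) * (2 - g ^ 2))) *
    ((2 + g ^ 2) * (2 - g ^ 2) * Complex.normSq (u + w)
      + Complex.normSq ((2 + (g:ℂ) ^ 2) * u + 4 * Complex.I * g * v - (2 + (g:ℂ) ^ 2) * w)
      + 2 * (2 - g ^ 2) ^ 2 * Complex.normSq v)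

open Complex in
lemma qform_nonneg (g : ℝ) (hg : g ^ 2 < 2) (u v w : ℂ) : 0 ≤ qform g u v w := by
  have h1 : (0:ℝ) < 2 - g ^ 2 := by linarith
  have h2 : (0:ℝ) < 2 + g ^ 2 := by positivity
  unfold qform
  have hA : (0:ℝ) ≤ (2 + g ^ 2) * (2 - g ^ 2) * normSq (u + w) := by
    have := normSq_nonneg (u + w); positivity
  have hB := normSq_nonneg ((2 + (g:ℂ) ^ 2) * u + 4 * Complex.I * g * v - (2 + (g:ℂ) ^ 2) * w)
  have hC : (0:ℝ) ≤ 2 * (2 - g ^ 2) ^ 2 * normSq v := by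
    have := normSq_nonneg v; positivity
  have c1 : (0:ℝ) ≤ 1 / (2 * (2 + g ^ 2) * (2 - g ^ 2)) := by positivity
  exact mul_nonneg c1 (by linarith)

open Complex in
lemma qform_pos (g : ℝ) (hg : g ^ 2 < 2) {u v w : ℂ}
    (h : ¬(u = 0 ∧ v = 0 ∧ w = 0)) : 0 < qform g u v w := by
  have h1 : (0:ℝ) < 2 - g ^ 2 := by linarith
  have h2 : (0:ℝ) < 2 + g ^ 2 := by positivity
  have hA : (0:ℝ) ≤ (2 + g ^ 2) * (2 - g ^ 2) * normSq (u + w) := by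
    have := normSq_nonneg (u + w); positivity
  have hB := normSq_nonneg ((2 + (g:ℂ) ^ 2) * u + 4 * Complex.I * g * v - (2 + (g:ℂ) ^ 2) * w)
  have hC : (0:ℝ) ≤ 2 * (2 - g ^ 2) ^ 2 * normSq v := by
    have := normSq_nonneg v; positivity
  have c1 : (0:ℝ) < 1 / (2 * (2 + g ^ 2) * (2 - g ^ 2)) := by positivity
  have hsum : (0:ℝ) < (2 + g ^ 2) * (2 - g ^ 2) * normSq (u + w)
      + normSq ((2 + (g:ℂ) ^ 2) * u + 4 * Complex.I * g * v - (2 + (g:ℂ) ^ 2) * w)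
      + 2 * (2 - g ^ 2) ^ 2 * normSq v := by
    rcases eq_or_ne (u + w) 0 with huw | huw
    · rcases eq_or_ne v 0 with hv | hv
      · have hz : (2 + (g:ℂ) ^ 2) * u + 4 * Complex.I * g * v - (2 + (g:ℂ) ^ 2) * w ≠ 0 := by
          intro hz
          apply h
          have hb : (2 + (g:ℂ) ^ 2) ≠ 0 := by
            have : ((2 + g ^ 2 : ℝ) : ℂ) ≠ 0 := ofReal_ne_zero.mpr (by positivity)
            push_cast at this
            exact this
          have huw2 : u = w := by
            have h' : (2 + (g:ℂ) ^ 2) * (u - w) = 0 := by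
              linear_combination hz - 4 * Complex.I * g * hv
            exact sub_eq_zero.mp ((mul_eq_zero.mp h').resolve_left hb)
          have hu : u = 0 := by
            have h2u : (2:ℂ) * u = 0 := by linear_combination huw + huw2
            simpa using h2u
          refine ⟨hu, hv, ?_⟩
          rw [← huw2, hu]
        have s2 : 0 < normSq ((2 + (g:ℂ) ^ 2) * u + 4 * Complex.I * g * v - (2 + (g:ℂ) ^ 2) * w) :=
          normSq_pos.mpr hz
        linarith
      · have s3 : (0:ℝ) < 2 * (2 - g ^ 2) ^ 2 * normSq v := by
          have := normSq_pos.mpr hv; positivity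
        linarith
    · have s1 : (0:ℝ) < (2 + g ^ 2) * (2 - g ^ 2) * normSq (u + w) := by
        have := normSq_pos.mpr huw; positivity
      linarith
  unfold qform
  exact mul_pos c1 hsum

open Complex in
set_option maxHeartbeats 2000000 in
lemma block_eq (g : ℝ) (hg : g ^ 2 < 2) (u v w : ℂ) :
    (starRingEnd ℂ) u * (-2 / ((g:ℂ) ^ 2 - 2) * u + -(2 * Complex.I * g) / ((g:ℂ) ^ 2 - 2) * v
        + (g:ℂ) ^ 2 / ((g:ℂ) ^ 2 - 2) * w)
    + (starRingEnd ℂ) v * (2 * Complex.I * g / ((g:ℂ) ^ 2 - 2) * u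
        + -((g:ℂ) ^ 2 + 2) / ((g:ℂ) ^ 2 - 2) * v + -(2 * Complex.I * g) / ((g:ℂ) ^ 2 - 2) * w)
    + (starRingEnd ℂ) w * ((g:ℂ) ^ 2 / ((g:ℂ) ^ 2 - 2) * u + 2 * Complex.I * g / ((g:ℂ) ^ 2 - 2) * v
        + -2 / ((g:ℂ) ^ 2 - 2) * w)
    = ((qform g u v w : ℝ) : ℂ) := by
  have hd : ((g:ℂ) ^ 2 - 2) ≠ 0 := by
    have : ((g ^ 2 - 2 : ℝ) : ℂ) ≠ 0 := ofReal_ne_zero.mpr (by linarith)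
    push_cast at this; exact this
  have hK : ((2:ℂ) * (2 + (g:ℂ) ^ 2) * (2 - (g:ℂ) ^ 2)) ≠ 0 := by
    have : ((2 * (2 + g ^ 2) * (2 - g ^ 2) : ℝ) : ℂ) ≠ 0 := ofReal_ne_zero.mpr (by nlinarith)
    push_cast at this; exact this
  have h1 : ((2:ℂ) - (g:ℂ) ^ 2) * ((g:ℂ) ^ 2 - 2)⁻¹ = -1 := by
    field_simp
    ring
  have h2 : ((2:ℂ) * (2 + (g:ℂ) ^ 2) * (2 - (g:ℂ) ^ 2))
      * ((2:ℂ) * (2 + (g:ℂ) ^ 2) * (2 - (g:ℂ) ^ 2))⁻¹ = 1 := mul_inv_cancel₀ hK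
  unfold qform
  push_cast
  simp only [← Complex.mul_conj]
  simp only [map_add, map_sub, _root_.map_mul, map_ofNat, map_pow, Complex.conj_I,
    Complex.conj_ofReal]
  simp only [div_eq_mul_inv]
  linear_combination
    (2 * (2 + (g:ℂ) ^ 2) * ((2:ℂ) * (2 + (g:ℂ) ^ 2) * (2 - (g:ℂ) ^ 2))⁻¹ *
      ((starRingEnd ℂ) u * (-2 * u - (2 * Complex.I * g) * v + (g:ℂ) ^ 2 * w)
        + (starRingEnd ℂ) v * ((2 * Complex.I * g) * u - ((g:ℂ) ^ 2 + 2) * v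
            - (2 * Complex.I * g) * w)
        + (starRingEnd ℂ) w * ((g:ℂ) ^ 2 * u + (2 * Complex.I * g) * v - 2 * w))) * h1
    - (((g:ℂ) ^ 2 - 2)⁻¹ *
      ((starRingEnd ℂ) u * (-2 * u - (2 * Complex.I * g) * v + (g:ℂ) ^ 2 * w)
        + (starRingEnd ℂ) v * ((2 * Complex.I * g) * u - ((g:ℂ) ^ 2 + 2) * v
            - (2 * Complex.I * g) * w)
        + (starRingEnd ℂ) w * ((g:ℂ) ^ 2 * u + (2 * Complex.I * g) * v - 2 * w))) * h2
    + ((g:ℂ) ^ 2 * v * (starRingEnd ℂ) v * ((2:ℂ) * (2 + (g:ℂ) ^ 2) * (2 - (g:ℂ) ^ 2))⁻¹ * 16)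
        * Complex.I_sq

open Complex in
set_option maxHeartbeats 2000000 in
lemma dot_eq (g : ℝ) (hg : g ^ 2 < 2) (x : Fin 8 → ℂ) :
    star x ⬝ᵥ (eta3chain g *ᵥ x) =
      ((normSq (x 0) + qform g (x 1) (x 2) (x 3) + qform g (x 4) (x 5) (x 6)
        + normSq (x 7) : ℝ) : ℂ) := by
  have b1 := block_eq g hg (x 1) (x 2) (x 3)
  have b2 := block_eq g hg (x 4) (x 5) (x 6)
  simp only [eta3chain, dotProduct, Matrix.mulVec, Fin.sum_univ_eight, Pi.star_apply,
    RCLike.star_def, Matrix.of_apply, vec8_0, vec8_1, vec8_2, vec8_3, vec8_4, vec8_5, vec8_6,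
    vec8_7]
  rw [Complex.ofReal_add, Complex.ofReal_add, Complex.ofReal_add, ← Complex.mul_conj,
    ← Complex.mul_conj]
  linear_combination b1 + b2

set_option maxHeartbeats 4000000 in
/-- For `0 ≤ g² < 2` the matrix `η` intertwines `H` with its adjoint,
`η H = H* η`, is Hermitian, and is positive definite. -/
theorem eta3chain_quasiHermitian (g : ℝ) (hg : g ^ 2 < 2) :
    eta3chain g * H3chain g = (H3chain g)ᴴ * eta3chain g ∧
    (eta3chain g).IsHermitian ∧ (eta3chain g).PosDef := by
  have hd : ((g:ℂ) ^ 2 - 2) ≠ 0 := by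
    have : ((g ^ 2 - 2 : ℝ) : ℂ) ≠ 0 := Complex.ofReal_ne_zero.mpr (by linarith)
    push_cast at this; exact this
  have hherm : (eta3chain g).IsHermitian := by
    ext i j
    fin_cases i <;> fin_cases j <;>
      simp only [eta3chain, Matrix.conjTranspose_apply, Matrix.of_apply, vec8_0, vec8_1, vec8_2,
        vec8_3, vec8_4, vec8_5, vec8_6, vec8_7, vec8m_0, vec8m_1, vec8m_2, vec8m_3, vec8m_4,
        vec8m_5, vec8m_6, vec8m_7, star_zero,
        star_one, Complex.star_def, star_neg, star_mul', map_div₀, map_sub, map_add,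
        _root_.map_mul, map_pow, map_ofNat, map_neg, _root_.map_one, _root_.map_zero,
        Complex.conj_I, Complex.conj_ofReal] <;>
      ring
  refine ⟨?_, hherm, Matrix.posDef_iff_dotProduct_mulVec.mpr ⟨hherm, fun x hx => ?_⟩⟩
  · ext i j
    rw [Matrix.mul_apply, Matrix.mul_apply, Fin.sum_univ_eight, Fin.sum_univ_eight]
    fin_cases i <;> fin_cases j <;>
      simp only [H3chain, eta3chain, Matrix.conjTranspose_apply, Matrix.of_apply, vec8_0, vec8_1, vec8_2,
        vec8_3, vec8_4, vec8_5, vec8_6, vec8_7, vec8m_0, vec8m_1, vec8m_2, vec8m_3, vec8m_4,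
        vec8m_5, vec8m_6, vec8m_7,
        star_zero, star_one, Complex.star_def, star_neg, star_mul', map_div₀, map_sub, map_add,
        _root_.map_mul, map_pow, map_ofNat, map_neg, _root_.map_one, _root_.map_zero,
        Complex.conj_I, Complex.conj_ofReal, mul_zero, zero_mul, add_zero, zero_add, mul_one,
        one_mul] <;>
      first
        | ring1
        | linear_combination (2 * (g:ℂ) ^ 2 * ((g:ℂ) ^ 2 - 2)⁻¹) * Complex.I_sq
        | linear_combination (-(2 * (g:ℂ) ^ 2 * ((g:ℂ) ^ 2 - 2)⁻¹)) * Complex.I_sq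
  · rw [dot_eq g hg x, Complex.zero_lt_real]
    have hn0 := Complex.normSq_nonneg (x 0)
    have hn7 := Complex.normSq_nonneg (x 7)
    have hq1 := qform_nonneg g hg (x 1) (x 2) (x 3)
    have hq2 := qform_nonneg g hg (x 4) (x 5) (x 6)
    have hcomp : x 0 ≠ 0 ∨ x 1 ≠ 0 ∨ x 2 ≠ 0 ∨ x 3 ≠ 0 ∨ x 4 ≠ 0 ∨ x 5 ≠ 0 ∨ x 6 ≠ 0
        ∨ x 7 ≠ 0 := by
      by_contra hcon
      push_neg at hcon
      obtain ⟨h0, h1, h2, h3, h4, h5, h6, h7⟩ := hcon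
      apply hx
      funext i
      fin_cases i
      · exact h0
      · exact h1
      · exact h2
      · exact h3
      · exact h4
      · exact h5
      · exact h6
      · exact h7
    rcases hcomp with hc | hc | hc | hc | hc | hc | hc | hc
    · have := Complex.normSq_pos.mpr hc
      linarith
    · have := qform_pos g hg (u := x 1) (v := x 2) (w := x 3) (fun hh => hc hh.1)
      linarith
    · have := qform_pos g hg (u := x 1) (v := x 2) (w := x 3) (fun hh => hc hh.2.1)
      linarith
    · have := qform_pos g hg (u := x 1) (v := x 2) (w := x 3) (fun hh => hc hh.2.2)
      linarith
    · have := qform_pos g hg (u := x 4) (v := x 5) (w := x 6) (fun hh => hc hh.1)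
      linarith
    · have := qform_pos g hg (u := x 4) (v := x 5) (w := x 6) (fun hh => hc hh.2.1)
      linarith
    · have := qform_pos g hg (u := x 4) (v := x 5) (w := x 6) (fun hh => hc hh.2.2)
      linarith
    · have := Complex.normSq_pos.mpr hc
      linarith
end

section
/- For M odd and real ε with |ε| < 2, writing ε = 2 cos ζ with ζ ∈ (0, π), the identity ∑_{k=0}^{m} ((−1)^{m+k} ε^{2k}/(2k+1)!)·[(m+1+k)!/(m−k)! − g²(m+k)!/(m−1−k)!] = 2·(sin((M+1)ζ) + g² sin((M−1)ζ))/(ε √(4−ε²)) holds, where m = (M−1)/2 and g is real. -/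
open Finset

noncomputable def Tc (E : ℝ) (m : ℕ) : ℝ :=
  ∑ k ∈ Finset.range (m + 1),
    (-1 : ℝ) ^ (m + k) * E ^ k * ((m + 1 + k).choose (2 * k + 1) : ℝ)

lemma choose_aux (n r : ℕ) :
    (n + 2).choose (r + 2) + n.choose (r + 2)
      = n.choose r + 2 * (n + 1).choose (r + 2) := by
  have h1 : (n + 2).choose (r + 2) = (n + 1).choose (r + 1) + (n + 1).choose (r + 2) :=
    Nat.choose_succ_succ _ _
  have h2 : (n + 1).choose (r + 2) = n.choose (r + 1) + n.choose (r + 2) :=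
    Nat.choose_succ_succ _ _
  have h3 : (n + 1).choose (r + 1) = n.choose r + n.choose (r + 1) :=
    Nat.choose_succ_succ _ _
  omega

lemma Tc_rec (E : ℝ) (m : ℕ) :
    Tc E (m + 2) + 2 * Tc E (m + 1) + Tc E m = E * Tc E (m + 1) := by
  have hpad1 : Tc E (m + 1)
      = ∑ k ∈ Finset.range (m + 3),
          (-1 : ℝ) ^ (m + 1 + k) * E ^ k * ((m + 2 + k).choose (2 * k + 1) : ℝ) := by
    rw [Tc, Finset.sum_range_succ (n := m + 2)]
    have h0 : (m + 2 + (m + 2)).choose (2 * (m + 2) + 1) = 0 :=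
      Nat.choose_eq_zero_of_lt (by omega)
    rw [h0]
    norm_num
  have hpad0 : Tc E m
      = ∑ k ∈ Finset.range (m + 3),
          (-1 : ℝ) ^ (m + k) * E ^ k * ((m + 1 + k).choose (2 * k + 1) : ℝ) := by
    rw [Tc, Finset.sum_range_succ (n := m + 2), Finset.sum_range_succ (n := m + 1)]
    have h0 : (m + 1 + (m + 2)).choose (2 * (m + 2) + 1) = 0 :=
      Nat.choose_eq_zero_of_lt (by omega)
    have h1 : (m + 1 + (m + 1)).choose (2 * (m + 1) + 1) = 0 :=
      Nat.choose_eq_zero_of_lt (by omega)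
    rw [h0, h1]
    norm_num
  have hR : E * Tc E (m + 1)
      = ∑ k ∈ Finset.range (m + 2),
          (-1 : ℝ) ^ (m + 1 + k) * E ^ (k + 1) * ((m + 2 + k).choose (2 * k + 1) : ℝ) := by
    rw [Tc, Finset.mul_sum]
    apply Finset.sum_congr rfl
    intro k _
    ring
  rw [hR, hpad0, hpad1, Tc]
  rw [Finset.mul_sum, ← Finset.sum_add_distrib, ← Finset.sum_add_distrib]
  rw [Finset.sum_range_succ' _ (m + 2)]
  have hF0 : ((-1:ℝ) ^ (m + 2 + 0) * E ^ 0 * ((m + 2 + 1 + 0).choose (2 * 0 + 1) : ℝ) +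
          2 * ((-1:ℝ) ^ (m + 1 + 0) * E ^ 0 * ((m + 2 + 0).choose (2 * 0 + 1) : ℝ)) +
        (-1:ℝ) ^ (m + 0) * E ^ 0 * ((m + 1 + 0).choose (2 * 0 + 1) : ℝ)) = 0 := by
    simp only [Nat.add_zero, Nat.mul_zero, Nat.zero_add, Nat.choose_one_right, pow_zero]
    push_cast
    ring
  rw [hF0, add_zero]
  apply Finset.sum_congr rfl
  intro k _
  have hc := choose_aux (m + k + 2) (2 * k + 1)
  have hc' : ((m + k + 2 + 2).choose (2 * k + 1 + 2) : ℝ) + ((m + k + 2).choose (2 * k + 1 + 2) : ℝ)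
      = ((m + k + 2).choose (2 * k + 1) : ℝ) + 2 * ((m + k + 2 + 1).choose (2 * k + 1 + 2) : ℝ) := by
    exact_mod_cast congrArg (Nat.cast : ℕ → ℝ) hc
  have e1 : m + 2 + 1 + (k + 1) = m + k + 2 + 2 := by ring
  have e2 : m + 2 + (k + 1) = m + k + 2 + 1 := by ring
  have e3 : m + 1 + (k + 1) = m + k + 2 := by ring
  have e4 : 2 * (k + 1) + 1 = 2 * k + 1 + 2 := by ring
  have e5 : m + 2 + k = m + k + 2 := by ring
  rw [e1, e2, e3, e4, e5]
  linear_combination ((-1:ℝ) ^ (m + k + 1) * E ^ (k + 1)) * hc'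

lemma Tc_sin (ζ : ℝ) (m : ℕ) :
    Tc ((2 * Real.cos ζ) ^ 2) m * Real.sin (2 * ζ)
      = Real.sin ((2 * (m : ℝ) + 2) * ζ) := by
  have key : ∀ n : ℕ,
      (Tc ((2 * Real.cos ζ) ^ 2) n * Real.sin (2 * ζ)
        = Real.sin ((2 * (n : ℝ) + 2) * ζ)) ∧
      (Tc ((2 * Real.cos ζ) ^ 2) (n + 1) * Real.sin (2 * ζ)
        = Real.sin ((2 * ((n : ℝ) + 1) + 2) * ζ)) := by
    intro n
    induction n with
    | zero =>
      constructor
      · have h0 : Tc ((2 * Real.cos ζ) ^ 2) 0 = 1 := by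
          simp [Tc]
        rw [h0]
        norm_num
      · have h1 : Tc ((2 * Real.cos ζ) ^ 2) 1 = (2 * Real.cos ζ) ^ 2 - 2 := by
          simp [Tc, Finset.sum_range_succ]
          ring
        rw [h1]
        have e2 : (2 * (((0 : ℕ) : ℝ) + 1) + 2) * ζ = 2 * (2 * ζ) := by push_cast; ring
        rw [e2, Real.sin_two_mul, Real.sin_two_mul, Real.cos_two_mul, Real.sin_two_mul]
        ring
    | succ n ih =>
      obtain ⟨h1, h2⟩ := ih
      refine ⟨by push_cast at h2 ⊢; exact h2, ?_⟩
      have e := Tc_rec ((2 * Real.cos ζ) ^ 2) n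
      have hE : (2 * Real.cos ζ) ^ 2 - 2 = 2 * Real.cos (2 * ζ) := by
        rw [Real.cos_two_mul]; ring
      have hstep : Tc ((2 * Real.cos ζ) ^ 2) (n + 2) * Real.sin (2 * ζ)
          = ((2 * Real.cos ζ) ^ 2 - 2) * Real.sin ((2 * ((n : ℝ) + 1) + 2) * ζ)
            - Real.sin ((2 * (n : ℝ) + 2) * ζ) := by
        rw [← h1, ← h2]
        linear_combination Real.sin (2 * ζ) * e
      have goal2 : Tc ((2 * Real.cos ζ) ^ 2) (n + 2) * Real.sin (2 * ζ)
          = Real.sin ((2 * (n : ℝ) + 6) * ζ) := by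
        rw [hstep, hE]
        have ha : (2 * (n : ℝ) + 6) * ζ = (2 * ((n : ℝ) + 1) + 2) * ζ + 2 * ζ := by ring
        have hb : (2 * (n : ℝ) + 2) * ζ = (2 * ((n : ℝ) + 1) + 2) * ζ - 2 * ζ := by ring
        rw [ha, hb, Real.sin_add, Real.sin_sub]
        ring
      have hx : (2 * (((n + 1 : ℕ) : ℝ) + 1) + 2) * ζ = (2 * (n : ℝ) + 6) * ζ := by
        push_cast; ring
      rw [hx]
      exact goal2
  exact (key m).1

lemma sum_eq (ε g : ℝ) (m : ℕ) :
    ∑ k ∈ Finset.range (m + 1),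
      (-1 : ℝ) ^ (m + k) * ε ^ (2 * k) / (Nat.factorial (2 * k + 1) : ℝ) *
        ((Nat.factorial (m + 1 + k) : ℝ) / (Nat.factorial (m - k) : ℝ) -
          (if k < m then
            g ^ 2 * (Nat.factorial (m + k) : ℝ) / (Nat.factorial (m - 1 - k) : ℝ)
          else 0))
      = Tc (ε ^ 2) m
        + g ^ 2 * ∑ k ∈ Finset.range (m + 1),
            (-1 : ℝ) ^ (m + 1 + k) * (ε ^ 2) ^ k * ((m + k).choose (2 * k + 1) : ℝ) := by
  rw [Tc, Finset.mul_sum, ← Finset.sum_add_distrib]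
  apply Finset.sum_congr rfl
  intro k hk
  have hkm : k ≤ m := by
    have := Finset.mem_range.mp hk; omega
  have hfac1 : ((2 * k + 1).factorial : ℝ) ≠ 0 := by
    exact_mod_cast (Nat.factorial_ne_zero _)
  have hc1 : ((m + 1 + k).choose (2 * k + 1) : ℝ)
      = ((m + 1 + k).factorial : ℝ) / (((2 * k + 1).factorial : ℝ) * ((m - k).factorial : ℝ)) := by
    rw [Nat.cast_choose ℝ (show 2 * k + 1 ≤ m + 1 + k by omega),
      show m + 1 + k - (2 * k + 1) = m - k from by omega]
  have hE : ε ^ (2 * k) = (ε ^ 2) ^ k := by rw [← pow_mul]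
  rcases Nat.lt_or_ge k m with hlt | hge
  · have hc2 : ((m + k).choose (2 * k + 1) : ℝ)
        = ((m + k).factorial : ℝ) / (((2 * k + 1).factorial : ℝ) * ((m - 1 - k).factorial : ℝ)) := by
      rw [Nat.cast_choose ℝ (show 2 * k + 1 ≤ m + k by omega),
        show m + k - (2 * k + 1) = m - 1 - k from by omega]
    rw [if_pos hlt, hc1, hc2, hE]
    have hfac2 : ((m - k).factorial : ℝ) ≠ 0 := by exact_mod_cast (Nat.factorial_ne_zero _)
    have hfac3 : ((m - 1 - k).factorial : ℝ) ≠ 0 := by exact_mod_cast (Nat.factorial_ne_zero _)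
    have hsgn : (-1 : ℝ) ^ (m + 1 + k) = -(-1 : ℝ) ^ (m + k) := by
      rw [show m + 1 + k = (m + k) + 1 from by ring, pow_succ]
      ring
    rw [hsgn]
    field_simp
    ring
  · have hkm' : k = m := by omega
    subst hkm'
    rw [if_neg (lt_irrefl k)]
    have hc0 : ((k + k).choose (2 * k + 1) : ℝ) = 0 := by
      rw [Nat.choose_eq_zero_of_lt (by omega)]
      norm_num
    rw [hc1, hE, hc0]
    field_simp
    ring

lemma V_succ (E : ℝ) (m : ℕ) :
    ∑ k ∈ Finset.range (m + 2),
        (-1 : ℝ) ^ (m + 2 + k) * E ^ k * ((m + 1 + k).choose (2 * k + 1) : ℝ)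
      = Tc E m := by
  rw [Finset.sum_range_succ]
  have h0 : (m + 1 + (m + 1)).choose (2 * (m + 1) + 1) = 0 :=
    Nat.choose_eq_zero_of_lt (by omega)
  rw [h0, Tc]
  norm_num
  apply Finset.sum_congr rfl
  intro k _
  have hsgn : (-1 : ℝ) ^ (m + 2 + k) = (-1 : ℝ) ^ (m + k) := by
    rw [show m + 2 + k = (m + k) + 1 + 1 from by ring, pow_succ, pow_succ]
    ring
  rw [hsgn]

/-- For `M = 2m+1` odd and `ε = 2 cos ζ` with `ζ ∈ (0, π)`, `ε ≠ 0`, the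
polynomial form of the reduced single-particle-energy polynomial equals its
trigonometric form:
`∑_{k=0}^{m} (−1)^{m+k} ε^{2k}/(2k+1)!·[(m+1+k)!/(m−k)! − g²(m+k)!/(m−1−k)!]
 = 2(sin((M+1)ζ) + g² sin((M−1)ζ))/(ε √(4−ε²))`
(the `g²` term is absent for `k = m`, where `1/(m−1−k)! = 1/Γ(0) = 0`). -/
theorem Fodd_closed_form (M m : ℕ) (hM : M = 2 * m + 1) (g ζ ε : ℝ)
    (hζ0 : 0 < ζ) (hζπ : ζ < Real.pi) (hε : ε = 2 * Real.cos ζ) (hε0 : ε ≠ 0) :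
    ∑ k ∈ Finset.range (m + 1),
      (-1 : ℝ) ^ (m + k) * ε ^ (2 * k) / (Nat.factorial (2 * k + 1) : ℝ) *
        ((Nat.factorial (m + 1 + k) : ℝ) / (Nat.factorial (m - k) : ℝ) -
          (if k < m then
            g ^ 2 * (Nat.factorial (m + k) : ℝ) / (Nat.factorial (m - 1 - k) : ℝ)
          else 0))
      = 2 * (Real.sin ((M + 1) * ζ) + g ^ 2 * Real.sin ((M - 1) * ζ))
          / (ε * Real.sqrt (4 - ε ^ 2)) := by
  subst hM
  subst hε
  have hsinpos : 0 < Real.sin ζ := Real.sin_pos_of_pos_of_lt_pi hζ0 hζπ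
  have hcos : Real.cos ζ ≠ 0 := by
    intro h
    exact hε0 (by rw [h]; ring)
  have hsin2 : Real.sin (2 * ζ) ≠ 0 := by
    rw [Real.sin_two_mul]
    exact mul_ne_zero (mul_ne_zero two_ne_zero (ne_of_gt hsinpos)) hcos
  have hsqrt : Real.sqrt (4 - (2 * Real.cos ζ) ^ 2) = 2 * Real.sin ζ := by
    have hpyth := Real.sin_sq_add_cos_sq ζ
    rw [show 4 - (2 * Real.cos ζ) ^ 2 = (2 * Real.sin ζ) ^ 2 from by nlinarith]
    exact Real.sqrt_sq (by positivity)
  have hden : (2 * Real.cos ζ) * Real.sqrt (4 - (2 * Real.cos ζ) ^ 2)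
      = 2 * Real.sin (2 * ζ) := by
    rw [hsqrt, Real.sin_two_mul]; ring
  rw [sum_eq, hden]
  have hM1 : ((2 * m + 1 : ℕ) : ℝ) + 1 = 2 * (m : ℝ) + 2 := by push_cast; ring
  have hM2 : ((2 * m + 1 : ℕ) : ℝ) - 1 = 2 * (m : ℝ) := by push_cast; ring
  rw [hM1, hM2]
  have h1 : Real.sin ((2 * (m : ℝ) + 2) * ζ)
      = Tc ((2 * Real.cos ζ) ^ 2) m * Real.sin (2 * ζ) := (Tc_sin ζ m).symm
  rw [h1]
  cases m with
  | zero =>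
    have hV : ∑ k ∈ Finset.range (0 + 1),
        (-1 : ℝ) ^ (0 + 1 + k) * ((2 * Real.cos ζ) ^ 2) ^ k * ((0 + k).choose (2 * k + 1) : ℝ)
        = 0 := by
      simp
    rw [hV]
    have h0 : Real.sin (2 * ((0 : ℕ) : ℝ) * ζ) = 0 := by norm_num
    rw [h0]
    field_simp
    ring
  | succ n =>
    have hV : ∑ k ∈ Finset.range (n + 1 + 1),
        (-1 : ℝ) ^ (n + 1 + 1 + k) * ((2 * Real.cos ζ) ^ 2) ^ k
          * ((n + 1 + k).choose (2 * k + 1) : ℝ)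
        = Tc ((2 * Real.cos ζ) ^ 2) n := V_succ _ n
    rw [hV]
    have h2 : Real.sin (2 * (((n + 1 : ℕ)) : ℝ) * ζ)
        = Tc ((2 * Real.cos ζ) ^ 2) n * Real.sin (2 * ζ) := by
      rw [show 2 * (((n + 1 : ℕ)) : ℝ) * ζ = (2 * (n : ℝ) + 2) * ζ from by push_cast; ring]
      exact (Tc_sin ζ n).symm
    rw [h2]
    field_simp
end
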